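/- Let 𝒜 ∈ Sp(2d,ℝ) and assume E_𝒜 is invertible. Then ℱ_𝒜 = E_𝒜^{−T} F_𝒜ᵀ ℰ_𝒜, where E_𝒜^{−T} denotes the inverse transpose of E_𝒜. -/
import Mathlib


open Matrix

/-- Index type for `2d × 2d` matrices, viewed as two `d`-blocks. -/
abbrev I2 (d : ℕ) := Fin d ⊕ Fin d

/-- Index type for `4d × 4d` matrices, viewed as four `d`-blocks. -/
abbrev I4 (d : ℕ) := I2 d ⊕ I2 d

/-- The standard symplectic matrix `J = [[0, I], [-I, 0]]`. -/
def symplJ (α : Type*) [Fintype α] [DecidableEq α] : Matrix (α ⊕ α) (α ⊕ α) ℝ :=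
  fromBlocks 0 1 (-1) 0

/-- `A` is symplectic if `Aᵀ J A = J`. -/
def IsSymplectic {α : Type*} [Fintype α] [DecidableEq α]
    (A : Matrix (α ⊕ α) (α ⊕ α) ℝ) : Prop :=
  Aᵀ * symplJ α * A = symplJ α

/-- Embedding of the "odd" block columns (blocks 1 and 3) of a `4d×4d` matrix. -/
def colOdd (d : ℕ) : I2 d → I4 d :=
  Sum.elim (fun i => Sum.inl (Sum.inl i)) (fun i => Sum.inr (Sum.inl i))

/-- Embedding of the "even" block columns (blocks 2 and 4) of a `4d×4d` matrix. -/
def colEven (d : ℕ) : I2 d → I4 d :=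
  Sum.elim (fun i => Sum.inl (Sum.inr i)) (fun i => Sum.inr (Sum.inr i))

/-- `E_𝒜 = [[A₁₁, A₁₃], [A₂₁, A₂₃]]`. -/
def subE {d : ℕ} (A : Matrix (I4 d) (I4 d) ℝ) : Matrix (I2 d) (I2 d) ℝ :=
  A.submatrix Sum.inl (colOdd d)

/-- `ℰ_𝒜 = [[A₁₂, A₁₄], [A₂₂, A₂₄]]`. -/
def subEE {d : ℕ} (A : Matrix (I4 d) (I4 d) ℝ) : Matrix (I2 d) (I2 d) ℝ :=
  A.submatrix Sum.inl (colEven d)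

/-- `F_𝒜 = [[A₃₁, A₃₃], [A₄₁, A₄₃]]`. -/
def subF {d : ℕ} (A : Matrix (I4 d) (I4 d) ℝ) : Matrix (I2 d) (I2 d) ℝ :=
  A.submatrix Sum.inr (colOdd d)

/-- `ℱ_𝒜 = [[A₃₂, A₃₄], [A₄₂, A₄₄]]`. -/
def subFF {d : ℕ} (A : Matrix (I4 d) (I4 d) ℝ) : Matrix (I2 d) (I2 d) ℝ :=
  A.submatrix Sum.inr (colEven d)

/-- Row/column embedding of the `i`-th `d`-block (i = 1,2,3,4). -/
def r1 (d : ℕ) : Fin d → I4 d := fun i => Sum.inl (Sum.inl i)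
def r2 (d : ℕ) : Fin d → I4 d := fun i => Sum.inl (Sum.inr i)
def r3 (d : ℕ) : Fin d → I4 d := fun i => Sum.inr (Sum.inl i)
def r4 (d : ℕ) : Fin d → I4 d := fun i => Sum.inr (Sum.inr i)

/-- The `d×d` block `A_{ij}` of a `4d×4d` matrix, given the row and column embeddings. -/
def blk {d : ℕ} (A : Matrix (I4 d) (I4 d) ℝ) (ri cj : Fin d → I4 d) :
    Matrix (Fin d) (Fin d) ℝ :=
  A.submatrix ri cj

/-- The symmetric matrix `M_𝒜` associated with a symplectic `4d×4d` matrix `𝒜`. -/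
def Mmat {d : ℕ} (A : Matrix (I4 d) (I4 d) ℝ) : Matrix (I2 d) (I2 d) ℝ :=
  fromBlocks
    ((blk A (r1 d) (r1 d))ᵀ * blk A (r3 d) (r1 d) + (blk A (r2 d) (r1 d))ᵀ * blk A (r4 d) (r1 d))
    ((blk A (r3 d) (r1 d))ᵀ * blk A (r1 d) (r3 d) + (blk A (r4 d) (r1 d))ᵀ * blk A (r2 d) (r3 d))
    ((blk A (r1 d) (r3 d))ᵀ * blk A (r3 d) (r1 d) + (blk A (r2 d) (r3 d))ᵀ * blk A (r4 d) (r1 d))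
    ((blk A (r1 d) (r3 d))ᵀ * blk A (r3 d) (r3 d) + (blk A (r2 d) (r3 d))ᵀ * blk A (r4 d) (r3 d))

/-- `𝒟_E = [[E⁻¹, 0], [0, Eᵀ]]`. -/
noncomputable def Dmat {α : Type*} [Fintype α] [DecidableEq α] (E : Matrix α α ℝ) :
    Matrix (α ⊕ α) (α ⊕ α) ℝ :=
  fromBlocks E⁻¹ 0 0 Eᵀ

/-- `V_C = [[I, 0], [C, I]]`. -/
def Vmat {α : Type*} [Fintype α] [DecidableEq α] (C : Matrix α α ℝ) :
    Matrix (α ⊕ α) (α ⊕ α) ℝ :=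
  fromBlocks 1 0 C 1

/-- `L = [[0, I], [I, 0]]` (`2d × 2d`). -/
def Lmat (d : ℕ) : Matrix (I2 d) (I2 d) ℝ :=
  fromBlocks 0 1 1 0

/-- `Lift(G)`: the `4d×4d` matrix with block rows `[I,0,0,0]`, `[0,G₁₁,0,G₁₂]`,
`[0,0,I,0]`, `[0,G₂₁,0,G₂₂]`. -/
def Lift {d : ℕ} (G : Matrix (I2 d) (I2 d) ℝ) : Matrix (I4 d) (I4 d) ℝ :=
  fromBlocks
    (fromBlocks 1 0 0 (G.submatrix Sum.inl Sum.inl))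
    (fromBlocks 0 0 0 (G.submatrix Sum.inl Sum.inr))
    (fromBlocks 0 0 0 (G.submatrix Sum.inr Sum.inl))
    (fromBlocks 1 0 0 (G.submatrix Sum.inr Sum.inr))
/-- If `𝒜 ∈ Sp(2d,ℝ)` and `E_𝒜` is invertible, then `ℱ_𝒜 = E_𝒜⁻ᵀ F_𝒜ᵀ ℰ_𝒜`. -/
theorem subFF_eq (d : ℕ) (𝒜 : Matrix (I4 d) (I4 d) ℝ) (h𝒜 : IsSymplectic 𝒜)
    (hE : IsUnit (subE 𝒜)) :
    subFF 𝒜 = ((subE 𝒜)ᵀ)⁻¹ * (subF 𝒜)ᵀ * subEE 𝒜 := by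
  have key : (subE 𝒜)ᵀ * subFF 𝒜 = (subF 𝒜)ᵀ * subEE 𝒜 := by
    ext i j
    have h2 := congrFun (congrFun h𝒜 (colOdd d i)) (colEven d j)
    simp only [Matrix.mul_apply, symplJ, Matrix.transpose_apply, Fintype.sum_sum_type,
      Matrix.fromBlocks_apply₁₁, Matrix.fromBlocks_apply₁₂, Matrix.fromBlocks_apply₂₁,
      Matrix.fromBlocks_apply₂₂, Matrix.zero_apply, Matrix.one_apply, Matrix.neg_apply,
      mul_zero, zero_mul, mul_ite, ite_mul, mul_one, one_mul, mul_neg, neg_mul,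
      Sum.inl.injEq, Sum.inr.injEq, reduceCtorEq, if_false, Finset.sum_const_zero,
      Finset.sum_ite_eq, Finset.sum_ite_eq', Finset.mem_univ, if_true, Finset.sum_neg_distrib,
      zero_add, add_zero, Finset.sum_add_distrib, mul_comm] at h2 ⊢
    -- now conclude from h2
    cases i <;> cases j <;>
      simp only [colOdd, colEven, Sum.elim_inl, Sum.elim_inr,
        Matrix.fromBlocks_apply₁₁, Matrix.fromBlocks_apply₁₂, Matrix.fromBlocks_apply₂₁,
        Matrix.fromBlocks_apply₂₂, Matrix.zero_apply, Matrix.one_apply, Matrix.neg_apply,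
        Sum.inl.injEq, Sum.inr.injEq, reduceCtorEq, if_false,
        neg_zero, add_zero, zero_add, mul_neg, neg_mul, mul_comm,
        Finset.sum_neg_distrib] at h2 ⊢ <;>
      simp only [Matrix.mul_apply, subE, subEE, subF, subFF, Matrix.submatrix_apply,
        colOdd, colEven, Sum.elim_inl, Sum.elim_inr, Matrix.transpose_apply,
        Fintype.sum_sum_type, mul_comm] <;>
      linarith [h2]
  have hdet : IsUnit ((subE 𝒜)ᵀ).det := by
    rw [Matrix.det_transpose]
    exact (Matrix.isUnit_iff_isUnit_det _).mp hE
  rw [Matrix.mul_assoc, ← key, ← Matrix.mul_assoc, Matrix.nonsing_inv_mul _ hdet, one_mul]
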